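/- arXiv:1801.03988 — 6 statements merged into one kernel-verified Lean document; each statement's English description precedes it below -/
import Mathlib

section
/- If A is a K-ergodic map, then its adjoint A* is K*-ergodic; moreover a stationary vector and a dual stationary vector of A* are given by a dual stationary vector and a stationary vector of A, respectively. -/
open Filter Topology RealInnerProductSpace

variable {V : Type*} [NormedAddCommGroup V] [InnerProductSpace ℝ V] [FiniteDimensional ℝ V]

/-- The dual cone of a set `K`. -/
def dualSet (K : Set V) : Set V := {y | ∀ x ∈ K, 0 ≤ ⟪y, x⟫}

/-- The spectral radius via the Gelfand formula. -/
noncomputable def specRad (A : V →L[ℝ] V) : ℝ :=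
  Filter.limsup (fun n : ℕ => ‖A ^ n‖ ^ ((n : ℝ)⁻¹)) Filter.atTop

/-- `A` is `K`-ergodic with stationary vector `x₀` and dual stationary vector `y₀`. -/
def IsErgodicWith (K : Set V) (A : V →L[ℝ] V) (x₀ y₀ : V) : Prop :=
  0 < specRad A ∧ x₀ ∈ K ∧ y₀ ∈ dualSet K ∧ ⟪y₀, x₀⟫ = 1 ∧
    ∀ x : V, Tendsto
      (fun n : ℕ => (n : ℝ)⁻¹ • ∑ k ∈ Finset.range n, (((specRad A)⁻¹ • A) ^ k) x)
      atTop (𝓝 (⟪y₀, x⟫ • x₀))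

/-- `A` is `K`-ergodic. -/
def IsErgodic (K : Set V) (A : V →L[ℝ] V) : Prop := ∃ x₀ y₀, IsErgodicWith K A x₀ y₀

/-- `A` is `K`-mixing with stationary vector `x₀` and dual stationary vector `y₀`. -/
def IsMixingWith (K : Set V) (A : V →L[ℝ] V) (x₀ y₀ : V) : Prop :=
  0 < specRad A ∧ x₀ ∈ K ∧ y₀ ∈ dualSet K ∧ ⟪y₀, x₀⟫ = 1 ∧
    ∀ x : V, Tendsto (fun n : ℕ => (((specRad A)⁻¹ • A) ^ n) x) atTop (𝓝 (⟪y₀, x⟫ • x₀))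

/-- `A` is `K`-mixing. -/
def IsMixing (K : Set V) (A : V →L[ℝ] V) : Prop := ∃ x₀ y₀, IsMixingWith K A x₀ y₀

theorem stmt_2 (K : Set V) (hKcl : IsClosed K) (hKconv : Convex ℝ K)
    (hKcone : ∀ c : ℝ, 0 ≤ c → ∀ x ∈ K, c • x ∈ K)
    (hKint : (interior K).Nonempty) (hKpt : K ∩ (-K) = {(0 : V)})
    (A : V →L[ℝ] V) (hA : ∀ x ∈ K, A x ∈ K)
    (x₀ y₀ : V) (herg : IsErgodicWith K A x₀ y₀) :
    IsErgodicWith (dualSet K) (ContinuousLinearMap.adjoint A) y₀ x₀ := by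
  obtain ⟨hr, hx₀, hy₀, hxy, hconv⟩ := herg
  have hstar : specRad (ContinuousLinearMap.adjoint A) = specRad A := by
    unfold specRad
    congr 1
    funext n
    have h1 : (ContinuousLinearMap.adjoint A) ^ n = ContinuousLinearMap.adjoint (A ^ n) := by
      rw [← ContinuousLinearMap.star_eq_adjoint, ← ContinuousLinearMap.star_eq_adjoint, star_pow]
    rw [h1, LinearIsometryEquiv.norm_map]
  have hterm : ∀ (T : V →L[ℝ] V) (u v : V),
      ⟪u, ContinuousLinearMap.adjoint T v⟫ = ⟪v, T u⟫ := by
    intro T u v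
    rw [real_inner_comm, ContinuousLinearMap.adjoint_inner_left]
  refine ⟨by rw [hstar]; exact hr, hy₀, ?_, ?_, ?_⟩
  · intro z hz
    rw [real_inner_comm]
    exact hz x₀ hx₀
  · rw [real_inner_comm]; exact hxy
  · intro x
    have hpow : ∀ k : ℕ,
        ((specRad (ContinuousLinearMap.adjoint A))⁻¹ • ContinuousLinearMap.adjoint A) ^ k
          = ContinuousLinearMap.adjoint (((specRad A)⁻¹ • A) ^ k) := by
      intro k
      rw [hstar, ← ContinuousLinearMap.star_eq_adjoint, ← ContinuousLinearMap.star_eq_adjoint,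
        star_pow, star_smul, star_trivial ((specRad A)⁻¹)]
    simp only [hpow]
    set b := stdOrthonormalBasis ℝ V with hb
    have key : ∀ n : ℕ,
        (n : ℝ)⁻¹ • ∑ k ∈ Finset.range n, (ContinuousLinearMap.adjoint (((specRad A)⁻¹ • A) ^ k)) x
          = ∑ i, ⟪x, (n : ℝ)⁻¹ • ∑ k ∈ Finset.range n, (((specRad A)⁻¹ • A) ^ k) (b i)⟫ • b i := by
      intro n
      have hrepr := b.sum_repr ((n : ℝ)⁻¹ •
        ∑ k ∈ Finset.range n, (ContinuousLinearMap.adjoint (((specRad A)⁻¹ • A) ^ k)) x)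
      rw [← hrepr]
      refine Finset.sum_congr rfl fun i _ => ?_
      congr 1
      rw [OrthonormalBasis.repr_apply_apply, inner_smul_right, inner_smul_right,
        inner_sum, inner_sum]
      congr 1
      refine Finset.sum_congr rfl fun k _ => ?_
      rw [hterm]
    simp only [key]
    have hlim : Tendsto
        (fun n : ℕ => ∑ i, ⟪x, (n : ℝ)⁻¹ • ∑ k ∈ Finset.range n, (((specRad A)⁻¹ • A) ^ k) (b i)⟫ • b i)
        atTop (𝓝 (∑ i, ⟪x, ⟪y₀, b i⟫ • x₀⟫ • b i)) := by
      refine tendsto_finset_sum _ fun i _ => ?_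
      exact (((continuous_const.inner continuous_id).tendsto _).comp (hconv (b i))).smul_const (b i)
    have heq : (∑ i, ⟪x, ⟪y₀, b i⟫ • x₀⟫ • b i) = ⟪x₀, x⟫ • y₀ := by
      have : ∀ i, ⟪x, ⟪y₀, b i⟫ • x₀⟫ • b i = ⟪x₀, x⟫ • (⟪b i, y₀⟫ • b i) := by
        intro i
        rw [inner_smul_right, smul_smul, real_inner_comm y₀ (b i), mul_comm,
          real_inner_comm x x₀]
      simp only [this]
      rw [← Finset.smul_sum]
      congr 1
      have : ∀ i, ⟪b i, y₀⟫ • b i = b.repr y₀ i • b i := by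
        intro i; rw [OrthonormalBasis.repr_apply_apply]
      simp only [this]
      exact b.sum_repr y₀
    rw [← heq]
    exact hlim
end

section
/- If A is a K-ergodic map, then any stationary vector x₀ and dual stationary vector y₀ of A are eigenvectors of A and A* respectively, both associated with the eigenvalue r(A). -/
open Filter Topology RealInnerProductSpace

lemma geom_avg_limit_one {c : ℝ}
    (h : Tendsto (fun n : ℕ => (n : ℝ)⁻¹ * ∑ k ∈ Finset.range n, c ^ k) atTop (𝓝 1)) :
    c = 1 := by
  by_contra hc
  have hsum : ∀ n : ℕ, ∑ k ∈ Finset.range n, c ^ k = (c ^ n - 1) / (c - 1) :=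
    fun n => geom_sum_eq hc n
  have h1 : Tendsto (fun n : ℕ => (n : ℝ)⁻¹ * ((c ^ n - 1) / (c - 1))) atTop (𝓝 1) := by
    simpa [hsum] using h
  have h2 : Tendsto (fun n : ℕ => (n : ℝ)⁻¹ * ((c ^ n - 1) / (c - 1)) * (c - 1)) atTop
      (𝓝 (1 * (c - 1))) := h1.mul_const _
  have hc1 : c - 1 ≠ 0 := sub_ne_zero.mpr hc
  have h3 : Tendsto (fun n : ℕ => (n : ℝ)⁻¹ * (c ^ n - 1)) atTop (𝓝 (c - 1)) := by
    have : (fun n : ℕ => (n : ℝ)⁻¹ * ((c ^ n - 1) / (c - 1)) * (c - 1)) =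
        fun n : ℕ => (n : ℝ)⁻¹ * (c ^ n - 1) := by
      funext n; rw [mul_assoc, div_mul_cancel₀ _ hc1]
    rw [this] at h2; simpa using h2
  -- f n = c^n / n tends to c - 1
  have hf : Tendsto (fun n : ℕ => c ^ n / (n : ℝ)) atTop (𝓝 (c - 1)) := by
    have hinv : Tendsto (fun n : ℕ => (n : ℝ)⁻¹) atTop (𝓝 0) :=
      tendsto_inv_atTop_zero.comp tendsto_natCast_atTop_atTop
    have := h3.add hinv
    simp only [mul_sub, mul_one] at this
    have heq : (fun n : ℕ => (n : ℝ)⁻¹ * c ^ n - (n : ℝ)⁻¹ + (n : ℝ)⁻¹) =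
        fun n : ℕ => c ^ n / (n : ℝ) := by
      funext n; rw [sub_add_cancel, inv_mul_eq_div]
    rw [heq] at this
    simpa using this
  -- shifted sequence
  have hshift : Tendsto (fun n : ℕ => c ^ (n + 1) / ((n : ℝ) + 1)) atTop (𝓝 (c - 1)) := by
    have := hf.comp (tendsto_add_atTop_nat 1)
    refine this.congr fun n => ?_
    simp only [Function.comp]
    push_cast
    ring_nf
  have hratio : Tendsto (fun n : ℕ => (n : ℝ) / ((n : ℝ) + 1)) atTop (𝓝 1) :=
    tendsto_natCast_div_add_atTop (1 : ℝ)
  have hprod : Tendsto (fun n : ℕ => c * (c ^ n / (n : ℝ)) * ((n : ℝ) / ((n : ℝ) + 1)))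
      atTop (𝓝 (c * (c - 1) * 1)) := ((tendsto_const_nhds.mul hf).mul hratio)
  have heq2 : ∀ᶠ n : ℕ in atTop,
      c * (c ^ n / (n : ℝ)) * ((n : ℝ) / ((n : ℝ) + 1)) = c ^ (n + 1) / ((n : ℝ) + 1) := by
    filter_upwards [eventually_ge_atTop 1] with n hn
    have hn0 : (n : ℝ) ≠ 0 := Nat.cast_ne_zero.mpr (by omega)
    have hn1 : (n : ℝ) + 1 ≠ 0 := by positivity
    field_simp
    ring
  have hprod' : Tendsto (fun n : ℕ => c ^ (n + 1) / ((n : ℝ) + 1)) atTop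
      (𝓝 (c * (c - 1) * 1)) := hprod.congr' heq2
  have : c * (c - 1) * 1 = c - 1 := tendsto_nhds_unique hprod' hshift
  have : (c - 1) * (c - 1) = 0 := by ring_nf; ring_nf at this; linarith
  exact hc (sub_eq_zero.mp (mul_self_eq_zero.mp this))

variable {V : Type*} [NormedAddCommGroup V] [InnerProductSpace ℝ V] [FiniteDimensional ℝ V]

theorem stmt_3 (K : Set V) (hKcl : IsClosed K) (hKconv : Convex ℝ K)
    (hKcone : ∀ c : ℝ, 0 ≤ c → ∀ x ∈ K, c • x ∈ K)
    (hKint : (interior K).Nonempty) (hKpt : K ∩ (-K) = {(0 : V)})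
    (A : V →L[ℝ] V) (hA : ∀ x ∈ K, A x ∈ K)
    (x₀ y₀ : V) (herg : IsErgodicWith K A x₀ y₀) :
    x₀ ≠ 0 ∧ A x₀ = specRad A • x₀ ∧
      y₀ ≠ 0 ∧ ContinuousLinearMap.adjoint A y₀ = specRad A • y₀ := by
  obtain ⟨hr, hx₀K, hy₀K, hinner, hlim⟩ := herg
  set r := specRad A with hrdef
  set B : V →L[ℝ] V := r⁻¹ • A with hBdef
  have hx₀ : x₀ ≠ 0 := by
    rintro rfl; simp at hinner
  have hy₀ : y₀ ≠ 0 := by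
    rintro rfl; simp at hinner
  -- key identity : ⟪y₀, B x⟫ • x₀ = ⟪y₀, x⟫ • B x₀
  have key : ∀ x : V, ⟪y₀, B x⟫ • x₀ = ⟪y₀, x⟫ • B x₀ := by
    intro x
    have h1 := hlim (B x)
    have h2 : Tendsto (fun n : ℕ => B ((n : ℝ)⁻¹ • ∑ k ∈ Finset.range n, (B ^ k) x)) atTop
        (𝓝 (B (⟪y₀, x⟫ • x₀))) := (B.continuous.tendsto _).comp (hlim x)
    have heq : (fun n : ℕ => B ((n : ℝ)⁻¹ • ∑ k ∈ Finset.range n, (B ^ k) x)) =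
        fun n : ℕ => (n : ℝ)⁻¹ • ∑ k ∈ Finset.range n, (B ^ k) (B x) := by
      funext n
      rw [map_smul, map_sum]
      congr 1
      refine Finset.sum_congr rfl fun k _ => ?_
      have hcomm : B * B ^ k = B ^ k * B := ((Commute.refl B).pow_right k).eq
      calc B ((B ^ k) x) = (B * B ^ k) x := rfl
        _ = (B ^ k * B) x := by rw [hcomm]
        _ = (B ^ k) (B x) := rfl
    rw [heq] at h2
    have := tendsto_nhds_unique h2 h1
    rw [map_smul] at this
    exact this.symm
  -- eigenvector of B
  set c : ℝ := ⟪y₀, B x₀⟫ with hcdef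
  have hBx₀ : B x₀ = c • x₀ := by
    have := key x₀
    rw [hinner, one_smul] at this
    exact this.symm
  have hpow : ∀ k : ℕ, (B ^ k) x₀ = c ^ k • x₀ := by
    intro k
    induction k with
    | zero => simp
    | succ k ih =>
      have : B ^ (k + 1) = B * B ^ k := (pow_succ' B k)
      rw [this, ContinuousLinearMap.mul_apply, ih, map_smul, hBx₀, smul_smul, ← pow_succ]
  -- averages of c^k tend to 1
  have havg : Tendsto (fun n : ℕ => (n : ℝ)⁻¹ * ∑ k ∈ Finset.range n, c ^ k) atTop (𝓝 1) := by
    have h1 := hlim x₀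
    rw [hinner, one_smul] at h1
    have h2 : Tendsto (fun n : ℕ => ⟪y₀, (n : ℝ)⁻¹ • ∑ k ∈ Finset.range n, (B ^ k) x₀⟫)
        atTop (𝓝 (⟪y₀, x₀⟫)) := Filter.Tendsto.inner tendsto_const_nhds h1
    rw [hinner] at h2
    have heq : (fun n : ℕ => ⟪y₀, (n : ℝ)⁻¹ • ∑ k ∈ Finset.range n, (B ^ k) x₀⟫) =
        fun n : ℕ => (n : ℝ)⁻¹ * ∑ k ∈ Finset.range n, c ^ k := by
      funext n
      simp only [hpow, inner_smul_right, inner_sum]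
      rw [← Finset.sum_mul]
      simp [inner_smul_right, hinner]
    rwa [heq] at h2
  have hc1 : c = 1 := geom_avg_limit_one havg
  have hBx₀' : B x₀ = x₀ := by rw [hBx₀, hc1, one_smul]
  have hr0 : r ≠ 0 := ne_of_gt hr
  have hAx₀ : A x₀ = r • x₀ := by
    have : r⁻¹ • A x₀ = x₀ := by
      have := hBx₀'
      simp only [hBdef, ContinuousLinearMap.smul_apply] at this
      exact this
    calc A x₀ = r • (r⁻¹ • A x₀) := by rw [smul_smul, mul_inv_cancel₀ hr0, one_smul]
      _ = r • x₀ := by rw [this]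
  -- dual part
  have hdual : ∀ x : V, ⟪y₀, A x⟫ = ⟪r • y₀, x⟫ := by
    intro x
    have h := key x
    rw [hBx₀'] at h
    have hB : ⟪y₀, B x⟫ = ⟪y₀, x⟫ := smul_left_injective ℝ hx₀ h
    have hB' : ⟪y₀, r⁻¹ • A x⟫ = ⟪y₀, x⟫ := by
      simpa [hBdef, ContinuousLinearMap.smul_apply] using hB
    rw [inner_smul_right] at hB'
    rw [real_inner_smul_left]
    field_simp at hB' ⊢
    linarith
  have hadj : ContinuousLinearMap.adjoint A y₀ = r • y₀ := by
    apply ext_inner_right ℝ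
    intro x
    rw [ContinuousLinearMap.adjoint_inner_left]
    exact hdual x
  exact ⟨hx₀, hAx₀, hy₀, hadj⟩
end

section
/- Let K₁, K₂ be closed convex cones with nonempty interior satisfying Kⱼ ∩ (−Kⱼ) = {0}, let K̃ be a closed convex cone with K₁⊗K₂ ⊆ K̃ ⊆ (K₁*⊗K₂*)*, let Aⱼ be Kⱼ-mixing for j = 1,2, and suppose A₁⊗A₂ is K̃-positive. Then A₁⊗A₂ is K̃-mixing, with stationary vector x₀¹⊗x₀² and dual stationary vector y₀¹⊗y₀², and r(A₁⊗A₂) = r(A₁)r(A₂). -/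
open Filter Topology RealInnerProductSpace

variable {V : Type*} [NormedAddCommGroup V] [InnerProductSpace ℝ V] [FiniteDimensional ℝ V]

variable {V₁ V₂ W : Type*}
  [NormedAddCommGroup V₁] [InnerProductSpace ℝ V₁] [FiniteDimensional ℝ V₁]
  [NormedAddCommGroup V₂] [InnerProductSpace ℝ V₂] [FiniteDimensional ℝ V₂]
  [NormedAddCommGroup W] [InnerProductSpace ℝ W] [FiniteDimensional ℝ W]

/-- The tensor product cone: finite sums of elementary tensors of cone elements,
where `tmul` is the (abstract) tensor-product bilinear map. -/
def tensorCone (tmul : V₁ →ₗ[ℝ] V₂ →ₗ[ℝ] W) (K₁ : Set V₁) (K₂ : Set V₂) : Set W :=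
  {z | ∃ (n : ℕ) (f : Fin n → V₁) (g : Fin n → V₂),
    (∀ i, f i ∈ K₁) ∧ (∀ i, g i ∈ K₂) ∧ z = ∑ i, tmul (f i) (g i)}

private lemma norm_tmul_eq (tmul : V₁ →ₗ[ℝ] V₂ →ₗ[ℝ] W)
    (hinner : ∀ (a c : V₁) (b d : V₂), ⟪tmul a b, tmul c d⟫ = ⟪a, c⟫ * ⟪b, d⟫)
    (a : V₁) (b : V₂) : ‖tmul a b‖ = ‖a‖ * ‖b‖ := by
  have h := hinner a a b b
  rw [real_inner_self_eq_norm_mul_norm, real_inner_self_eq_norm_mul_norm,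
      real_inner_self_eq_norm_mul_norm] at h
  have h2 : ‖(tmul a) b‖ * ‖(tmul a) b‖ = (‖a‖ * ‖b‖) * (‖a‖ * ‖b‖) := by
    rw [h]; ring
  exact (mul_self_inj (norm_nonneg _) (by positivity)).mp h2

private lemma tendsto_tmul_aux (tmul : V₁ →ₗ[ℝ] V₂ →ₗ[ℝ] W)
    (hinner : ∀ (a c : V₁) (b d : V₂), ⟪tmul a b, tmul c d⟫ = ⟪a, c⟫ * ⟪b, d⟫)
    {u : ℕ → V₁} {v : ℕ → V₂} {u₀ : V₁} {v₀ : V₂}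
    (hu : Tendsto u atTop (𝓝 u₀)) (hv : Tendsto v atTop (𝓝 v₀)) :
    Tendsto (fun n => tmul (u n) (v n)) atTop (𝓝 (tmul u₀ v₀)) := by
  rw [tendsto_iff_norm_sub_tendsto_zero]
  have hbound : ∀ n, ‖tmul (u n) (v n) - tmul u₀ v₀‖ ≤
      ‖u n - u₀‖ * ‖v n‖ + ‖u₀‖ * ‖v n - v₀‖ := by
    intro n
    have hsplit : tmul (u n) (v n) - tmul u₀ v₀
        = tmul (u n - u₀) (v n) + tmul u₀ (v n - v₀) := by
      simp only [map_sub, LinearMap.sub_apply]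
      abel
    rw [hsplit]
    calc ‖tmul (u n - u₀) (v n) + tmul u₀ (v n - v₀)‖
        ≤ ‖tmul (u n - u₀) (v n)‖ + ‖tmul u₀ (v n - v₀)‖ := norm_add_le _ _
      _ = ‖u n - u₀‖ * ‖v n‖ + ‖u₀‖ * ‖v n - v₀‖ := by
          rw [norm_tmul_eq tmul hinner, norm_tmul_eq tmul hinner]
  have hg : Tendsto (fun n => ‖u n - u₀‖ * ‖v n‖ + ‖u₀‖ * ‖v n - v₀‖) atTop (𝓝 0) := by
    have h1 : Tendsto (fun n => ‖u n - u₀‖) atTop (𝓝 0) :=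
      tendsto_iff_norm_sub_tendsto_zero.mp hu
    have h2 : Tendsto (fun n => ‖v n - v₀‖) atTop (𝓝 0) :=
      tendsto_iff_norm_sub_tendsto_zero.mp hv
    have := (h1.mul hv.norm).add ((tendsto_const_nhds (x := ‖u₀‖)).mul h2)
    simpa using this
  exact squeeze_zero (fun n => norm_nonneg _) hbound hg

private lemma rpow_nat_inv_tendsto_one {a : ℝ} (ha : 0 < a) :
    Tendsto (fun n : ℕ => a ^ ((n : ℝ)⁻¹)) atTop (𝓝 1) := by
  have h0 : Tendsto (fun n : ℕ => ((n : ℝ))⁻¹) atTop (𝓝 0) :=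
    tendsto_inv_atTop_nhds_zero_nat
  have hc : ContinuousAt (fun y : ℝ => a ^ y) 0 := Real.continuousAt_const_rpow ha.ne'
  simpa [Real.rpow_zero, Function.comp_def] using hc.tendsto.comp h0

private lemma tendsto_rpow_inv_of_bounds {c : ℕ → ℝ} {lo hi : ℝ} (hlo : 0 < lo)
    (h : ∀ᶠ n in atTop, lo ≤ c n ∧ c n ≤ hi) :
    Tendsto (fun n : ℕ => c n ^ ((n : ℝ)⁻¹)) atTop (𝓝 1) := by
  have hhi : 0 < hi := by
    obtain ⟨n, hn⟩ := h.exists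
    linarith [hn.1, hn.2]
  refine tendsto_of_tendsto_of_tendsto_of_le_of_le'
    (rpow_nat_inv_tendsto_one hlo) (rpow_nat_inv_tendsto_one hhi) ?_ ?_
  · exact h.mono fun n hn => Real.rpow_le_rpow hlo.le hn.1 (by positivity)
  · exact h.mono fun n hn => Real.rpow_le_rpow (le_trans hlo.le hn.1) hn.2 (by positivity)
set_option maxHeartbeats 1000000 in
set_option synthInstance.maxHeartbeats 400000 in
theorem stmt_7 (tmul : V₁ →ₗ[ℝ] V₂ →ₗ[ℝ] W)
    (hinner : ∀ (a c : V₁) (b d : V₂), ⟪tmul a b, tmul c d⟫ = ⟪a, c⟫ * ⟪b, d⟫)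
    (hspan : Submodule.span ℝ {z : W | ∃ a b, z = tmul a b} = ⊤)
    (K₁ : Set V₁) (hK₁cl : IsClosed K₁) (hK₁conv : Convex ℝ K₁)
    (hK₁cone : ∀ c : ℝ, 0 ≤ c → ∀ x ∈ K₁, c • x ∈ K₁)
    (hK₁int : (interior K₁).Nonempty) (hK₁pt : K₁ ∩ (-K₁) = {(0 : V₁)})
    (K₂ : Set V₂) (hK₂cl : IsClosed K₂) (hK₂conv : Convex ℝ K₂)
    (hK₂cone : ∀ c : ℝ, 0 ≤ c → ∀ x ∈ K₂, c • x ∈ K₂)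
    (hK₂int : (interior K₂).Nonempty) (hK₂pt : K₂ ∩ (-K₂) = {(0 : V₂)})
    (Kt : Set W) (hKtcl : IsClosed Kt) (hKtconv : Convex ℝ Kt)
    (hKtcone : ∀ c : ℝ, 0 ≤ c → ∀ x ∈ Kt, c • x ∈ Kt)
    (hKt₁ : tensorCone tmul K₁ K₂ ⊆ Kt)
    (hKt₂ : Kt ⊆ dualSet (tensorCone tmul (dualSet K₁) (dualSet K₂)))
    (A₁ : V₁ →L[ℝ] V₁) (hA₁ : ∀ x ∈ K₁, A₁ x ∈ K₁)
    (A₂ : V₂ →L[ℝ] V₂) (hA₂ : ∀ x ∈ K₂, A₂ x ∈ K₂)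
    (x₀₁ y₀₁ : V₁) (hmix₁ : IsMixingWith K₁ A₁ x₀₁ y₀₁)
    (x₀₂ y₀₂ : V₂) (hmix₂ : IsMixingWith K₂ A₂ x₀₂ y₀₂)
    (B : W →L[ℝ] W) (hB : ∀ (a : V₁) (b : V₂), B (tmul a b) = tmul (A₁ a) (A₂ b))
    (hBpos : ∀ z ∈ Kt, B z ∈ Kt) :
    specRad B = specRad A₁ * specRad A₂ ∧
      IsMixingWith Kt B (tmul x₀₁ x₀₂) (tmul y₀₁ y₀₂) := by
  have hr₁ : 0 < specRad A₁ := hmix₁.1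
  have hr₂ : 0 < specRad A₂ := hmix₂.1
  set r₁ : ℝ := specRad A₁ with hr₁def
  set r₂ : ℝ := specRad A₂ with hr₂def
  set r : ℝ := r₁ * r₂ with hrdef
  have hr : 0 < r := mul_pos hr₁ hr₂
  set x₀ : W := tmul x₀₁ x₀₂ with hx₀def
  set y₀ : W := tmul y₀₁ y₀₂ with hy₀def
  -- powers of B on elementary tensors
  have hpow : ∀ (n : ℕ) (a : V₁) (b : V₂),
      (B ^ n) (tmul a b) = tmul ((A₁ ^ n) a) ((A₂ ^ n) b) := by
    intro n
    induction n with
    | zero => intro a b; simp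
    | succ n ih =>
        intro a b
        rw [pow_succ', pow_succ', pow_succ', ContinuousLinearMap.mul_apply,
          ContinuousLinearMap.mul_apply, ContinuousLinearMap.mul_apply, ih, hB]
  have hpowS : ∀ (n : ℕ) (a : V₁) (b : V₂),
      ((r⁻¹ • B) ^ n) (tmul a b)
        = tmul (((r₁⁻¹ • A₁) ^ n) a) (((r₂⁻¹ • A₂) ^ n) b) := by
    intro n a b
    rw [smul_pow, smul_pow, smul_pow, ContinuousLinearMap.smul_apply,
      ContinuousLinearMap.smul_apply, ContinuousLinearMap.smul_apply, hpow]
    simp only [map_smul, LinearMap.smul_apply, smul_smul, ← mul_pow]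
    rw [hrdef, mul_inv, mul_comm r₁⁻¹ r₂⁻¹]
  have hyx₁ : ⟪y₀₁, x₀₁⟫ = 1 := hmix₁.2.2.2.1
  have hyx₂ : ⟪y₀₂, x₀₂⟫ = 1 := hmix₂.2.2.2.1
  have hyx : ⟪y₀, x₀⟫ = 1 := by
    rw [hy₀def, hx₀def, hinner, hyx₁, hyx₂, one_mul]
  -- pointwise convergence of (r⁻¹ B)^n
  have key : ∀ x : W, Tendsto (fun n : ℕ => ((r⁻¹ • B) ^ n) x) atTop
      (𝓝 (⟪y₀, x⟫ • x₀)) := by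
    let S : Submodule ℝ W :=
      { carrier := {x | Tendsto (fun n : ℕ => ((r⁻¹ • B) ^ n) x) atTop (𝓝 (⟪y₀, x⟫ • x₀))}
        add_mem' := by
          intro a b ha hb
          show Tendsto (fun n : ℕ => ((r⁻¹ • B) ^ n) (a + b)) atTop (𝓝 (⟪y₀, a + b⟫ • x₀))
          simpa only [map_add, inner_add_right, add_smul] using ha.add hb
        zero_mem' := by
          show Tendsto (fun n : ℕ => ((r⁻¹ • B) ^ n) (0 : W)) atTop (𝓝 (⟪y₀, (0 : W)⟫ • x₀))
          simpa only [map_zero, inner_zero_right, zero_smul] using (tendsto_const_nhds :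
            Tendsto (fun _ : ℕ => (0 : W)) atTop (𝓝 0))
        smul_mem' := by
          intro c x hx
          show Tendsto (fun n : ℕ => ((r⁻¹ • B) ^ n) (c • x)) atTop (𝓝 (⟪y₀, c • x⟫ • x₀))
          simpa only [map_smul, inner_smul_right, smul_smul] using hx.const_smul c }
    have hsub : {z : W | ∃ a b, z = tmul a b} ⊆ S := by
      rintro z ⟨a, b, rfl⟩
      have h1 := tendsto_tmul_aux tmul hinner (hmix₁.2.2.2.2 a) (hmix₂.2.2.2.2 b)
      have h2 : tmul (⟪y₀₁, a⟫ • x₀₁) (⟪y₀₂, b⟫ • x₀₂) = ⟪y₀, tmul a b⟫ • x₀ := by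
        rw [hy₀def, hx₀def, hinner]
        simp [map_smul, smul_smul, mul_comm]
      show Tendsto (fun n : ℕ => ((r⁻¹ • B) ^ n) (tmul a b)) atTop
        (𝓝 (⟪y₀, tmul a b⟫ • x₀))
      rw [← h2]
      simpa only [hpowS] using h1
    have hS : ∀ x : W, x ∈ S := by
      intro x
      have hle := Submodule.span_le.mpr hsub
      rw [hspan] at hle
      exact hle trivial
    exact fun x => hS x
  -- x₀ ≠ 0
  have hx₀ne : x₀ ≠ 0 := by
    intro h
    rw [h, inner_zero_right] at hyx
    norm_num at hyx
  have hx₀pos : 0 < ‖x₀‖ := norm_pos_iff.mpr hx₀ne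
  -- uniform upper bound via Banach-Steinhaus
  obtain ⟨C, hC⟩ := banach_steinhaus (g := fun n : ℕ => (r⁻¹ • B) ^ n)
    (fun x => by
      obtain ⟨Cx, hCx⟩ := (key x).norm.bddAbove_range
      exact ⟨Cx, fun n => hCx ⟨n, rfl⟩⟩)
  -- eventual lower bound
  have hlim : Tendsto (fun n : ℕ => ‖((r⁻¹ • B) ^ n) x₀‖) atTop (𝓝 ‖x₀‖) := by
    simpa [hyx, one_smul] using (key x₀).norm
  have hevlo : ∀ᶠ n : ℕ in atTop, (1 : ℝ) / 2 ≤ ‖(r⁻¹ • B) ^ n‖ := by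
    filter_upwards [hlim.eventually (eventually_gt_nhds (by linarith : ‖x₀‖ / 2 < ‖x₀‖))]
      with n hn
    have h2 := ((r⁻¹ • B) ^ n).le_opNorm x₀
    nlinarith
  have hcb : ∀ᶠ n : ℕ in atTop,
      (1 : ℝ) / 2 ≤ ‖(r⁻¹ • B) ^ n‖ ∧ ‖(r⁻¹ • B) ^ n‖ ≤ C :=
    hevlo.mono fun n h => ⟨h, hC n⟩
  have h1 : Tendsto (fun n : ℕ => ‖(r⁻¹ • B) ^ n‖ ^ ((n : ℝ)⁻¹)) atTop (𝓝 1) :=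
    tendsto_rpow_inv_of_bounds (by norm_num) hcb
  have hnorm : ∀ n : ℕ, ‖B ^ n‖ = r ^ n * ‖(r⁻¹ • B) ^ n‖ := by
    intro n
    have hns : ‖(r⁻¹ • B) ^ n‖ = r⁻¹ ^ n * ‖B ^ n‖ := by
      rw [smul_pow, norm_smul (r⁻¹ ^ n) (B ^ n), Real.norm_eq_abs, abs_pow, abs_inv,
        abs_of_pos hr]
    rw [hns, ← mul_assoc, ← mul_pow, mul_inv_cancel₀ hr.ne', one_pow, one_mul]
  have h2 : Tendsto (fun n : ℕ => ‖B ^ n‖ ^ ((n : ℝ)⁻¹)) atTop (𝓝 r) := by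
    have h3 : Tendsto (fun n : ℕ => r * ‖(r⁻¹ • B) ^ n‖ ^ ((n : ℝ)⁻¹)) atTop (𝓝 r) := by
      have := (tendsto_const_nhds (x := r)).mul h1
      simpa using this
    refine h3.congr' ?_
    filter_upwards [eventually_ge_atTop 1] with n hn
    have hn0 : (n : ℝ) ≠ 0 := Nat.cast_ne_zero.mpr (by omega)
    rw [hnorm n, Real.mul_rpow (by positivity) (norm_nonneg _),
      ← Real.rpow_natCast r n, ← Real.rpow_mul hr.le, mul_inv_cancel₀ hn0, Real.rpow_one]
  have hrB : specRad B = r := h2.limsup_eq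
  refine ⟨hrB, ?_, ?_, ?_, hyx, ?_⟩
  · rw [hrB]; exact hr
  · exact hKt₁ ⟨1, fun _ => x₀₁, fun _ => x₀₂, fun _ => hmix₁.2.1, fun _ => hmix₂.2.1,
      by simp [hx₀def]⟩
  · intro z hz
    have hmem : y₀ ∈ tensorCone tmul (dualSet K₁) (dualSet K₂) :=
      ⟨1, fun _ => y₀₁, fun _ => y₀₂, fun _ => hmix₁.2.2.1, fun _ => hmix₂.2.2.1,
        by simp [hy₀def]⟩
    have := hKt₂ hz y₀ hmem
    rwa [real_inner_comm] at this
  · intro x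
    rw [hrB]
    exact key x
end

section
/- The map x ↦ ‖x‖_u := max{|⟨y,x⟩| : −u ≤ y ≤ u} is a norm on V, where the order y ≤ y′ means y′ − y ∈ K*. Moreover, if A is a DUP K-positive map, then ‖Ax‖_u ≤ ‖x‖_u for every x ∈ V. -/
open Filter Topology RealInnerProductSpace

variable {V : Type*} [NormedAddCommGroup V] [InnerProductSpace ℝ V] [FiniteDimensional ℝ V]

/-- The `u`-norm: the supremum of `|⟪y, x⟫|` over `-u ≤ y ≤ u` in the dual-cone order. -/
noncomputable def unorm (K : Set V) (u : V) (x : V) : ℝ :=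
  sSup {r : ℝ | ∃ y : V, u - y ∈ dualSet K ∧ y + u ∈ dualSet K ∧ r = |⟪y, x⟫|}

omit [FiniteDimensional ℝ V] in
/-- If a ball around `x₀` lies in `K`, then every element of the dual cone pairs
well with `x₀`. -/
lemma aux_dual_lb {K : Set V} {x₀ : V} {ε : ℝ} (hε : 0 < ε)
    (hball : Metric.ball x₀ ε ⊆ K) {y : V} (hy : y ∈ dualSet K) :
    ε / 2 * ‖y‖ ≤ ⟪y, x₀⟫ := by
  rcases eq_or_ne y 0 with rfl | hy0
  · simp
  · have hn : 0 < ‖y‖ := norm_pos_iff.mpr hy0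
    have hv : x₀ - (ε / 2 / ‖y‖) • y ∈ K := by
      apply hball
      rw [Metric.mem_ball, dist_eq_norm]
      have h1 : x₀ - (ε / 2 / ‖y‖) • y - x₀ = -((ε / 2 / ‖y‖) • y) := by abel
      rw [h1, norm_neg, norm_smul, Real.norm_eq_abs,
        abs_of_pos (by positivity : (0:ℝ) < ε / 2 / ‖y‖)]
      rw [div_mul_cancel₀ _ (ne_of_gt hn)]
      linarith
    have h0 := hy _ hv
    rw [inner_sub_right, real_inner_smul_right, real_inner_self_eq_norm_sq] at h0
    have : ε / 2 / ‖y‖ * ‖y‖ ^ 2 = ε / 2 * ‖y‖ := by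
      field_simp
    linarith [h0, this ▸ h0]

omit [FiniteDimensional ℝ V] in
lemma aux_bound {K : Set V} {x₀ : V} {ε : ℝ} (hε : 0 < ε)
    (hball : Metric.ball x₀ ε ⊆ K) {u y : V} (h1 : u - y ∈ dualSet K)
    (h2 : y + u ∈ dualSet K) : ‖y‖ ≤ ‖u‖ + 4 * ⟪u, x₀⟫ / ε := by
  have ha := aux_dual_lb hε hball h1
  have hb := aux_dual_lb hε hball h2
  have hsum : ⟪u - y, x₀⟫ + ⟪y + u, x₀⟫ = 2 * ⟪u, x₀⟫ := by
    rw [inner_sub_left, inner_add_left]; ring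
  have hb0 : (0:ℝ) ≤ ⟪y + u, x₀⟫ := le_trans (by positivity) hb
  have ha' : ε / 2 * ‖u - y‖ ≤ 2 * ⟪u, x₀⟫ := by linarith
  have huy : ‖u - y‖ ≤ 4 * ⟪u, x₀⟫ / ε := by
    rw [le_div_iff₀ hε]
    nlinarith
  calc ‖y‖ = ‖u - (u - y)‖ := by congr 1; abel
  _ ≤ ‖u‖ + ‖u - y‖ := norm_sub_le _ _
  _ ≤ ‖u‖ + 4 * ⟪u, x₀⟫ / ε := by linarith

theorem stmt_11 (K : Set V) (hKcl : IsClosed K) (hKconv : Convex ℝ K)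
    (hKcone : ∀ c : ℝ, 0 ≤ c → ∀ x ∈ K, c • x ∈ K)
    (hKint : (interior K).Nonempty) (hKpt : K ∩ (-K) = {(0 : V)})
    (u : V) (hu : u ∈ interior (dualSet K)) :
    (∀ x : V, 0 ≤ unorm K u x) ∧
    (∀ x : V, unorm K u x = 0 ↔ x = 0) ∧
    (∀ (c : ℝ) (x : V), unorm K u (c • x) = |c| * unorm K u x) ∧
    (∀ x y : V, unorm K u (x + y) ≤ unorm K u x + unorm K u y) ∧
    (∀ A : V →L[ℝ] V, (∀ x ∈ K, A x ∈ K) → ContinuousLinearMap.adjoint A u = u →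
      ∀ x : V, unorm K u (A x) ≤ unorm K u x) := by
  obtain ⟨x₀, hx₀⟩ := hKint
  obtain ⟨ε, hε, hball⟩ := Metric.mem_nhds_iff.mp (mem_interior_iff_mem_nhds.mp hx₀)
  obtain ⟨δ, hδ, hballu⟩ := Metric.mem_nhds_iff.mp (mem_interior_iff_mem_nhds.mp hu)
  have huK : u ∈ dualSet K := interior_subset hu
  set S : V → Set ℝ :=
    fun x => {r : ℝ | ∃ y : V, u - y ∈ dualSet K ∧ y + u ∈ dualSet K ∧ r = |⟪y, x⟫|}
    with hS
  have hud : unorm K u = fun x => sSup (S x) := rfl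
  set M : ℝ := ‖u‖ + 4 * ⟪u, x₀⟫ / ε with hM
  have hSle : ∀ x : V, ∀ r ∈ S x, r ≤ M * ‖x‖ := by
    rintro x r ⟨y, h1, h2, rfl⟩
    calc |⟪y, x⟫| ≤ ‖y‖ * ‖x‖ := abs_real_inner_le_norm y x
    _ ≤ M * ‖x‖ :=
      mul_le_mul_of_nonneg_right (aux_bound hε hball h1 h2) (norm_nonneg x)
  have hbdd : ∀ x : V, BddAbove (S x) := fun x => ⟨M * ‖x‖, fun r hr => hSle x r hr⟩
  have hmem0 : ∀ x : V, (0:ℝ) ∈ S x := by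
    intro x
    exact ⟨0, by simpa using huK, by simpa using huK, by simp⟩
  have hnonneg : ∀ x : V, 0 ≤ unorm K u x := fun x => le_csSup (hbdd x) (hmem0 x)
  have hmem : ∀ (x y : V), u - y ∈ dualSet K → y + u ∈ dualSet K →
      |⟪y, x⟫| ≤ unorm K u x := fun x y h1 h2 => le_csSup (hbdd x) ⟨y, h1, h2, rfl⟩
  have hzero : unorm K u 0 = 0 := by
    refine le_antisymm (Real.sSup_le ?_ le_rfl) (hnonneg 0)
    rintro r ⟨y, h1, h2, rfl⟩
    simp
  have hsmul_le : ∀ (c : ℝ) (x : V), unorm K u (c • x) ≤ |c| * unorm K u x := by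
    intro c x
    refine Real.sSup_le ?_ (mul_nonneg (abs_nonneg c) (hnonneg x))
    rintro r ⟨y, h1, h2, rfl⟩
    rw [real_inner_smul_right, abs_mul]
    exact mul_le_mul_of_nonneg_left (hmem x y h1 h2) (abs_nonneg c)
  have hsmul : ∀ (c : ℝ) (x : V), unorm K u (c • x) = |c| * unorm K u x := by
    intro c x
    rcases eq_or_ne c 0 with rfl | hc
    · simpa using hzero
    · refine le_antisymm (hsmul_le c x) ?_
      have := hsmul_le c⁻¹ (c • x)
      rw [smul_smul, inv_mul_cancel₀ hc, one_smul, abs_inv] at this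
      calc |c| * unorm K u x ≤ |c| * (|c|⁻¹ * unorm K u (c • x)) :=
        mul_le_mul_of_nonneg_left this (abs_nonneg c)
      _ = unorm K u (c • x) := by
        field_simp
  have hdef : ∀ x : V, x ≠ 0 → 0 < unorm K u x := by
    intro x hx
    have hnx : 0 < ‖x‖ := norm_pos_iff.mpr hx
    set y : V := (δ / 2 / ‖x‖) • x with hy
    have hny : ‖y‖ < δ := by
      rw [hy, norm_smul, Real.norm_eq_abs, abs_of_pos (by positivity : (0:ℝ) < δ / 2 / ‖x‖),
        div_mul_cancel₀ _ (ne_of_gt hnx)]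
      linarith
    have h1 : u - y ∈ dualSet K := by
      apply hballu
      rw [Metric.mem_ball, dist_eq_norm]
      simpa using hny
    have h2 : y + u ∈ dualSet K := by
      apply hballu
      rw [Metric.mem_ball, dist_eq_norm]
      simpa using hny
    have hyx : ⟪y, x⟫ = δ / 2 / ‖x‖ * ‖x‖ ^ 2 := by
      rw [hy, real_inner_smul_left, real_inner_self_eq_norm_sq]
    have hyx' : (0:ℝ) < ⟪y, x⟫ := by rw [hyx]; positivity
    calc (0:ℝ) < |⟪y, x⟫| := abs_pos.mpr (ne_of_gt hyx')
    _ ≤ unorm K u x := hmem x y h1 h2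
  refine ⟨hnonneg, ?_, hsmul, ?_, ?_⟩
  · intro x
    constructor
    · intro h
      by_contra hx
      exact absurd h (ne_of_gt (hdef x hx))
    · rintro rfl; exact hzero
  · intro x z
    refine Real.sSup_le ?_ (add_nonneg (hnonneg x) (hnonneg z))
    rintro r ⟨y, h1, h2, rfl⟩
    calc |⟪y, x + z⟫| = |⟪y, x⟫ + ⟪y, z⟫| := by rw [inner_add_right]
    _ ≤ |⟪y, x⟫| + |⟪y, z⟫| := abs_add_le _ _
    _ ≤ unorm K u x + unorm K u z := add_le_add (hmem x y h1 h2) (hmem z y h1 h2)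
  · intro A hAK hAu x
    refine Real.sSup_le ?_ (hnonneg x)
    rintro r ⟨y, h1, h2, rfl⟩
    set B := ContinuousLinearMap.adjoint A with hB
    have hBdual : ∀ z ∈ dualSet K, B z ∈ dualSet K := by
      intro z hz w hw
      rw [ContinuousLinearMap.adjoint_inner_left]
      exact hz _ (hAK w hw)
    have h1' : u - B y ∈ dualSet K := by
      have : u - B y = B (u - y) := by rw [map_sub, hAu]
      rw [this]; exact hBdual _ h1
    have h2' : B y + u ∈ dualSet K := by
      have : B y + u = B (y + u) := by rw [map_add, hAu]
      rw [this]; exact hBdual _ h2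
    have heq : (⟪B y, x⟫:ℝ) = ⟪y, A x⟫ := by
      rw [hB, ContinuousLinearMap.adjoint_inner_left]
    rw [← heq]
    exact hmem x (B y) h1' h2'
end

section
/- A K-positive map A satisfies: for every x ∈ K∖{0} there exists t > 0 with e^{tA}x ∈ K°, if and only if for all nonzero extremal vectors x of K and y of K* there exists a nonnegative integer n with ⟨y, Aⁿx⟩ > 0. -/
set_option maxHeartbeats 1000000
set_option synthInstance.maxHeartbeats 1000000

open Filter Topology RealInnerProductSpace

variable {V : Type*} [NormedAddCommGroup V] [InnerProductSpace ℝ V] [FiniteDimensional ℝ V]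

/-- `x` is an extremal vector of the cone `K`. -/
def IsExtremalVec (K : Set V) (x : V) : Prop :=
  x ∈ K ∧ ∀ x₁ x₂ : V, x₁ ∈ K → x₂ ∈ K → x = x₁ + x₂ →
    (∃ c : ℝ, x₁ = c • x) ∧ (∃ c : ℝ, x₂ = c • x)

/- ## Auxiliary lemmas -/

lemma aux_add_mem {C : Set V} (hconv : Convex ℝ C)
    (hcone : ∀ c : ℝ, 0 ≤ c → ∀ x ∈ C, c • x ∈ C) {u v : V} (hu : u ∈ C) (hv : v ∈ C) :
    u + v ∈ C := by
  have h := hconv hu hv (by norm_num : (0:ℝ) ≤ 1/2) (by norm_num : (0:ℝ) ≤ 1/2) (by norm_num)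
  have h2 := hcone 2 (by norm_num) _ h
  rw [smul_add, smul_smul, smul_smul] at h2
  norm_num at h2
  exact h2

lemma norm_smul_inv_norm'' {c : ℝ} (hc : 0 < c) {y : V} (hy : y ≠ 0) :
    ‖c • ‖y‖⁻¹ • y‖ = c := by
  rw [norm_smul, norm_smul, norm_inv, norm_norm, Real.norm_eq_abs, abs_of_pos hc,
    inv_mul_cancel₀ (norm_ne_zero_iff.mpr hy), mul_one]

/-- A pointed closed convex cone admits a uniformly positive linear functional. -/
lemma exists_uniform_pos (C : Set V) (hcl : IsClosed C) (hconv : Convex ℝ C)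
    (hcone : ∀ c : ℝ, 0 ≤ c → ∀ x ∈ C, c • x ∈ C)
    (hpt : ∀ v, v ∈ C → -v ∈ C → v = 0) (h0 : (0:V) ∈ C) :
    ∃ e : V, ∃ δ : ℝ, 0 < δ ∧ ∀ x ∈ C, δ * ‖x‖ ≤ ⟪e, x⟫ := by
  set D := dualSet C with hD
  have h0D : (0:V) ∈ D := by intro x hx; simp
  have hDconv : Convex ℝ D := by
    intro y₁ h₁ y₂ h₂ a b ha hb hab
    intro x hx
    rw [inner_add_left, real_inner_smul_left, real_inner_smul_left]
    exact add_nonneg (mul_nonneg ha (h₁ x hx)) (mul_nonneg hb (h₂ x hx))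
  have hkey : ∀ u : V, (∀ y ∈ D, ⟪u, y⟫ = 0) → u ∈ C := by
    intro u hu
    by_contra huC
    let CC : ProperCone ℝ V :=
      { carrier := C
        zero_mem' := h0
        smul_mem' := fun c x hx => hcone c c.2 x hx
        add_mem' := fun hx hy => aux_add_mem hconv hcone hx hy
        isClosed' := hcl }
    obtain ⟨y, hy1, hy2⟩ :=
      CC.hyperplane_separation'
        (show u ∉ CC from huC)
    have hyD : y ∈ D := by intro x hx; rw [real_inner_comm]; exact hy1 x hx
    have h3 := hu y hyD
    rw [real_inner_comm] at h3
    linarith [real_inner_comm u y]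
  have hint : (interior D).Nonempty := by
    by_contra hD0
    have haff : affineSpan ℝ D ≠ ⊤ := by
      intro h
      exact hD0 (hDconv.interior_nonempty_iff_affineSpan_eq_top.mpr h)
    have hvs : vectorSpan ℝ D ≠ ⊤ := by
      exact fun h => haff
        ((AffineSubspace.affineSpan_eq_top_iff_vectorSpan_eq_top_of_nonempty ℝ V V
          ⟨0, h0D⟩).mpr h)
    have hle : Submodule.span ℝ D ≤ vectorSpan ℝ D := by
      rw [vectorSpan_def]
      apply Submodule.span_mono
      intro v hv
      have := Set.vsub_mem_vsub hv h0D
      simpa using this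
    have hW : Submodule.span ℝ D ≠ ⊤ := fun h => hvs (top_unique (h ▸ hle))
    have horth : (Submodule.span ℝ D)ᗮ ≠ ⊥ := by
      intro h; exact hW (Submodule.orthogonal_eq_bot_iff.mp h)
    obtain ⟨u, huW, hu0⟩ := Submodule.exists_mem_ne_zero_of_ne_bot horth
    have hu : ∀ y ∈ D, ⟪u, y⟫ = 0 := by
      intro y hy
      have := (Submodule.mem_orthogonal _ u).mp huW y (Submodule.subset_span hy)
      rw [real_inner_comm]; exact this
    have h1 := hkey u hu
    have h2 := hkey (-u) (fun y hy => by rw [inner_neg_left, hu y hy, neg_zero])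
    exact hu0 (hpt u h1 h2)
  obtain ⟨e, he⟩ := hint
  obtain ⟨ε, hε, hball⟩ := Metric.mem_nhds_iff.mp (mem_interior_iff_mem_nhds.mp he)
  refine ⟨e, ε/2, by linarith, ?_⟩
  intro x hx
  rcases eq_or_ne x 0 with rfl | hx0
  · simp
  · have hw : e - (ε/2) • ‖x‖⁻¹ • x ∈ D := by
      apply hball
      rw [Metric.mem_ball, dist_eq_norm, sub_sub_cancel_left, norm_neg,
        norm_smul_inv_norm'' (by linarith) hx0]
      linarith
    have h2 := hw x hx
    rw [inner_sub_left, real_inner_smul_left, real_inner_smul_left,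
      real_inner_self_eq_norm_mul_norm,
      inv_mul_cancel_left₀ (norm_ne_zero_iff.mpr hx0)] at h2
    linarith

/-- A pointed closed convex cone which is not `{0}` has a nonzero extremal vector. -/
lemma exists_extremal (C : Set V) (hcl : IsClosed C) (hconv : Convex ℝ C)
    (hcone : ∀ c : ℝ, 0 ≤ c → ∀ x ∈ C, c • x ∈ C)
    (hpt : ∀ v, v ∈ C → -v ∈ C → v = 0)
    (hne : ∃ c ∈ C, c ≠ 0) :
    ∃ v, IsExtremalVec C v ∧ v ≠ 0 := by
  obtain ⟨c, hcC, hc0⟩ := hne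
  have h0 : (0:V) ∈ C := by have := hcone 0 le_rfl c hcC; rwa [zero_smul] at this
  obtain ⟨e, δ, hδ, he⟩ := exists_uniform_pos C hcl hconv hcone hpt h0
  set B := C ∩ {x : V | ⟪e, x⟫ = 1} with hB
  have hBne : B.Nonempty := by
    have htc : 0 < ⟪e, c⟫ := lt_of_lt_of_le (mul_pos hδ (norm_pos_iff.mpr hc0)) (he c hcC)
    refine ⟨⟪e, c⟫⁻¹ • c, hcone _ (inv_nonneg.mpr htc.le) c hcC, ?_⟩
    show ⟪e, ⟪e, c⟫⁻¹ • c⟫ = 1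
    rw [real_inner_smul_right]
    exact inv_mul_cancel₀ htc.ne'
  have hBcl : IsClosed B :=
    hcl.inter (isClosed_eq (Continuous.inner continuous_const continuous_id) continuous_const)
  have hBcomp : IsCompact B := by
    apply Metric.isCompact_of_isClosed_isBounded hBcl
    apply (Metric.isBounded_closedBall (x := (0:V)) (r := δ⁻¹)).subset
    intro x hx
    rw [Metric.mem_closedBall, dist_zero_right]
    have h1 := he x hx.1
    have h2 : δ * ‖x‖ ≤ 1 := by rw [hx.2] at h1; exact h1
    have h3 : δ * ‖x‖ ≤ δ * δ⁻¹ := by rw [mul_inv_cancel₀ hδ.ne']; exact h2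
    exact le_of_mul_le_mul_left h3 hδ
  obtain ⟨v, hv⟩ := hBcomp.extremePoints_nonempty hBne
  have hvB : v ∈ B := hv.1
  have hv0 : v ≠ 0 := by
    intro h; rw [h] at hvB
    have := hvB.2
    simp at this
  refine ⟨v, ⟨hvB.1, ?_⟩, hv0⟩
  intro x₁ x₂ h₁ h₂ heq
  have ht1 : 0 ≤ ⟪e, x₁⟫ := le_trans (mul_nonneg hδ.le (norm_nonneg _)) (he _ h₁)
  have ht2 : 0 ≤ ⟪e, x₂⟫ := le_trans (mul_nonneg hδ.le (norm_nonneg _)) (he _ h₂)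
  have hsum : ⟪e, x₁⟫ + ⟪e, x₂⟫ = 1 := by
    rw [← inner_add_right, ← heq]; exact hvB.2
  rcases eq_or_lt_of_le ht1 with h10 | h1p
  · have hx1 : x₁ = 0 := by
      have hh := he x₁ h₁
      have hn : ‖x₁‖ ≤ 0 := by nlinarith
      exact norm_le_zero_iff.mp hn
    exact ⟨⟨0, by simp [hx1]⟩, ⟨1, by rw [one_smul, heq, hx1, zero_add]⟩⟩
  rcases eq_or_lt_of_le ht2 with h20 | h2p
  · have hx2 : x₂ = 0 := by
      have hh := he x₂ h₂
      have hn : ‖x₂‖ ≤ 0 := by nlinarith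
      exact norm_le_zero_iff.mp hn
    exact ⟨⟨1, by rw [one_smul, heq, hx2, add_zero]⟩, ⟨0, by simp [hx2]⟩⟩
  · have hu₁ : ⟪e, x₁⟫⁻¹ • x₁ ∈ B := by
      refine ⟨hcone _ (inv_nonneg.mpr h1p.le) _ h₁, ?_⟩
      show ⟪e, ⟪e, x₁⟫⁻¹ • x₁⟫ = 1
      rw [real_inner_smul_right]; exact inv_mul_cancel₀ h1p.ne'
    have hu₂ : ⟪e, x₂⟫⁻¹ • x₂ ∈ B := by
      refine ⟨hcone _ (inv_nonneg.mpr h2p.le) _ h₂, ?_⟩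
      show ⟪e, ⟪e, x₂⟫⁻¹ • x₂⟫ = 1
      rw [real_inner_smul_right]; exact inv_mul_cancel₀ h2p.ne'
    have hseg : v ∈ openSegment ℝ (⟪e, x₁⟫⁻¹ • x₁) (⟪e, x₂⟫⁻¹ • x₂) := by
      refine ⟨⟪e, x₁⟫, ⟪e, x₂⟫, h1p, h2p, hsum, ?_⟩
      rw [smul_smul, smul_smul, mul_inv_cancel₀ h1p.ne', mul_inv_cancel₀ h2p.ne',
        one_smul, one_smul, ← heq]
    obtain ⟨hA1, hA2⟩ := (mem_extremePoints.mp hv).2 _ hu₁ _ hu₂ hseg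
    refine ⟨⟨⟪e, x₁⟫, ?_⟩, ⟨⟪e, x₂⟫, ?_⟩⟩
    · rw [← hA1, smul_smul, mul_inv_cancel₀ h1p.ne', one_smul]
    · rw [← hA2, smul_smul, mul_inv_cancel₀ h2p.ne', one_smul]

lemma pow_mem_cone {K : Set V} (A : V →L[ℝ] V) (hA : ∀ x ∈ K, A x ∈ K) :
    ∀ (n : ℕ) (x : V), x ∈ K → (A ^ n) x ∈ K := by
  intro n
  induction n with
  | zero => intro x hx; simpa using hx
  | succ n ih =>
    intro x hx
    rw [pow_succ, ContinuousLinearMap.mul_apply]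
    exact ih _ (hA x hx)

lemma summable_exp_terms (A : V →L[ℝ] V) (t : ℝ) (x : V) :
    Summable (fun n : ℕ => (((n.factorial : ℝ))⁻¹ * t ^ n) • ((A ^ n) x)) := by
  have hs : Summable (fun n : ℕ => ((n.factorial : ℝ))⁻¹ • (t • A) ^ n) :=
    NormedSpace.expSeries_summable' (𝕂 := ℝ) (t • A)
  have h2 := hs.map (ContinuousLinearMap.apply ℝ V x).toLinearMap.toAddMonoidHom
    (ContinuousLinearMap.apply ℝ V x).continuous
  convert h2 using 2 with n
  simp [Function.comp, smul_pow, smul_smul]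

lemma exp_apply_eq (A : V →L[ℝ] V) (t : ℝ) (x : V) :
    NormedSpace.exp (t • A) x = ∑' n : ℕ, (((n.factorial : ℝ))⁻¹ * t ^ n) • ((A ^ n) x) := by
  have hs : Summable (fun n : ℕ => ((n.factorial : ℝ))⁻¹ • (t • A) ^ n) :=
    NormedSpace.expSeries_summable' (𝕂 := ℝ) (t • A)
  have h1 : NormedSpace.exp (t • A) x
      = (ContinuousLinearMap.apply ℝ V x) (∑' n : ℕ, ((n.factorial : ℝ))⁻¹ • (t • A) ^ n) := by
    rw [NormedSpace.exp_eq_tsum (𝕂 := ℝ)]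
    rfl
  rw [h1, (ContinuousLinearMap.apply ℝ V x).map_tsum hs]
  congr 1
  funext n
  simp [smul_pow, smul_smul]

lemma inner_exp_apply (A : V →L[ℝ] V) (t : ℝ) (x y : V) :
    ⟪y, NormedSpace.exp (t • A) x⟫
      = ∑' n : ℕ, (((n.factorial : ℝ))⁻¹ * t ^ n) * ⟪y, (A ^ n) x⟫ := by
  rw [exp_apply_eq]
  have h := (innerSL ℝ y).map_tsum (summable_exp_terms A t x)
  simp only [innerSL_apply_apply] at h
  rw [h]
  congr 1
  funext n
  rw [real_inner_smul_right]

lemma summable_inner_exp (A : V →L[ℝ] V) (t : ℝ) (x y : V) :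
    Summable (fun n : ℕ => (((n.factorial : ℝ))⁻¹ * t ^ n) * ⟪y, (A ^ n) x⟫) := by
  have h2 := (summable_exp_terms A t x).map (innerSL ℝ y).toLinearMap.toAddMonoidHom
    (innerSL ℝ y).continuous
  convert h2 using 2 with n
  simp [Function.comp, real_inner_smul_right]

lemma inner_pos_of_mem_interior {K : Set V} {y z : V} (hy : y ∈ dualSet K) (hy0 : y ≠ 0)
    (hz : z ∈ interior K) : 0 < ⟪y, z⟫ := by
  obtain ⟨ε, hε, hball⟩ := Metric.mem_nhds_iff.mp (mem_interior_iff_mem_nhds.mp hz)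
  have hw : z - (ε/2) • ‖y‖⁻¹ • y ∈ K := by
    apply hball
    rw [Metric.mem_ball, dist_eq_norm, sub_sub_cancel_left, norm_neg,
      norm_smul_inv_norm'' (by linarith) hy0]
    linarith
  have h2 := hy _ hw
  rw [inner_sub_right, real_inner_smul_right, real_inner_smul_right,
    real_inner_self_eq_norm_mul_norm,
    inv_mul_cancel_left₀ (norm_ne_zero_iff.mpr hy0)] at h2
  have hny : 0 < ‖y‖ := norm_pos_iff.mpr hy0
  nlinarith

lemma mem_interior_of_inner_pos {K : Set V} (hKconv : Convex ℝ K)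
    (hKcone : ∀ c : ℝ, 0 ≤ c → ∀ x ∈ K, c • x ∈ K) (hKint : (interior K).Nonempty)
    {z : V} (hz : z ∈ K) (h : ∀ y ∈ dualSet K, y ≠ 0 → 0 < ⟪y, z⟫) : z ∈ interior K := by
  by_contra hzi
  obtain ⟨f, hf⟩ := geometric_hahn_banach_open_point hKconv.interior isOpen_interior hzi
  obtain ⟨b, hb⟩ := hKint
  have hle : ∀ a ∈ K, f a ≤ f z := by
    intro a ha
    have hseg : ∀ lam : ℝ, lam ∈ Set.Ioc (0:ℝ) 1 → (1 - lam) * f a + lam * f b < f z := by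
      intro lam hlam
      have hmem : (1 - lam) • a + lam • b ∈ interior K :=
        hKconv.combo_closure_interior_mem_interior (subset_closure ha) hb
          (by linarith [hlam.2]) hlam.1 (by ring)
      have hlt := hf _ hmem
      simpa [map_add, map_smul, smul_eq_mul] using hlt
    have hcont : Tendsto (fun lam : ℝ => (1 - lam) * f a + lam * f b) (𝓝[>] 0) (𝓝 (f a)) := by
      have hc : Continuous fun lam : ℝ => (1 - lam) * f a + lam * f b := by continuity
      simpa using (hc.tendsto 0).mono_left nhdsWithin_le_nhds
    exact le_of_tendsto hcont (Filter.eventually_of_mem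
      (Ioc_mem_nhdsGT one_pos) (fun lam hlam => (hseg lam hlam).le))
  have h0K : (0:V) ∈ K := by have := hKcone 0 le_rfl z hz; rwa [zero_smul] at this
  have hfz0 : 0 ≤ f z := by have := hle 0 h0K; simpa using this
  set y := -(InnerProductSpace.toDual ℝ V).symm f with hy
  have hyip : ∀ w : V, ⟪y, w⟫ = -(f w) := by
    intro w; rw [hy, inner_neg_left, InnerProductSpace.toDual_symm_apply]
  have hyD : y ∈ dualSet K := by
    intro a ha
    rw [hyip]
    rcases le_or_gt (f a) 0 with h' | h'
    · linarith
    · exfalso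
      have hc : (0:ℝ) ≤ (f z + 1) / (f a) := div_nonneg (by linarith) h'.le
      have hs := hle _ (hKcone _ hc a ha)
      rw [map_smul, smul_eq_mul, div_mul_cancel₀ _ h'.ne'] at hs
      linarith
  have hy0 : y ≠ 0 := by
    intro h0
    have hfb := hyip b
    have hfz := hyip z
    rw [h0, inner_zero_left] at hfb hfz
    have hlt := hf b hb
    linarith
  have hpos := h y hyD hy0
  rw [hyip] at hpos
  linarith

theorem stmt_14 (K : Set V) (hKcl : IsClosed K) (hKconv : Convex ℝ K)
    (hKcone : ∀ c : ℝ, 0 ≤ c → ∀ x ∈ K, c • x ∈ K)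
    (hKint : (interior K).Nonempty) (hKpt : K ∩ (-K) = {(0 : V)})
    (A : V →L[ℝ] V) (hA : ∀ x ∈ K, A x ∈ K) :
    (∀ x ∈ K, x ≠ 0 → ∃ t : ℝ, 0 < t ∧ NormedSpace.exp (t • A) x ∈ interior K) ↔
      (∀ x y : V, IsExtremalVec K x → x ≠ 0 → IsExtremalVec (dualSet K) y → y ≠ 0 →
        ∃ n : ℕ, 0 < ⟪y, (A ^ n) x⟫) := by
  have hKpt' : ∀ v, v ∈ K → -v ∈ K → v = 0 := by
    intro v h1 h2
    have hm : v ∈ K ∩ (-K) := ⟨h1, Set.mem_neg.mpr h2⟩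
    rw [hKpt] at hm
    exact hm
  have h0K : (0:V) ∈ K := by
    obtain ⟨b, hb⟩ := hKint
    have := hKcone 0 le_rfl b (interior_subset hb)
    rwa [zero_smul] at this
  constructor
  · intro hL x y hx hx0 hy hy0
    obtain ⟨t, ht, hmem⟩ := hL x hx.1 hx0
    by_contra hn
    push_neg at hn
    have hzero : ∀ n : ℕ, ⟪y, (A ^ n) x⟫ = 0 :=
      fun n => le_antisymm (hn n) (hy.1 _ (pow_mem_cone A hA n x hx.1))
    have hpos := inner_pos_of_mem_interior hy.1 hy0 hmem
    rw [inner_exp_apply] at hpos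
    simp only [hzero, mul_zero, tsum_zero, lt_self_iff_false] at hpos
  · intro hR x hx hx0
    -- properties of the dual cone
    have hdual_cone : ∀ c : ℝ, 0 ≤ c → ∀ y ∈ dualSet K, c • y ∈ dualSet K := by
      intro c hc y hy z hz
      rw [real_inner_smul_left]
      exact mul_nonneg hc (hy z hz)
    have hdual_conv : Convex ℝ (dualSet K) := by
      intro y₁ h₁ y₂ h₂ a b ha hb hab z hz
      rw [inner_add_left, real_inner_smul_left, real_inner_smul_left]
      exact add_nonneg (mul_nonneg ha (h₁ z hz)) (mul_nonneg hb (h₂ z hz))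
    have hdual_cl : IsClosed (dualSet K) := by
      have hEq : dualSet K = ⋂ z ∈ K, {y : V | 0 ≤ ⟪y, z⟫} := by
        ext y; simp [dualSet, Set.mem_iInter]
      rw [hEq]
      exact isClosed_biInter fun z hz =>
        isClosed_le continuous_const (Continuous.inner continuous_id continuous_const)
    have hdual_pt : ∀ y, y ∈ dualSet K → -y ∈ dualSet K → y = 0 := by
      intro y h1 h2
      by_contra hy0
      obtain ⟨b, hb⟩ := hKint
      obtain ⟨ε, hε, hball⟩ := Metric.mem_nhds_iff.mp (mem_interior_iff_mem_nhds.mp hb)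
      have hw : b + (ε/2) • ‖y‖⁻¹ • y ∈ K := by
        apply hball
        rw [Metric.mem_ball, dist_eq_norm, add_sub_cancel_left,
          norm_smul_inv_norm'' (by linarith) hy0]
        linarith
      have hzero : ∀ z ∈ K, ⟪y, z⟫ = 0 := by
        intro z hz
        have hneg := h2 z hz
        rw [inner_neg_left] at hneg
        exact le_antisymm (by linarith) (h1 z hz)
      have h3 := hzero _ hw
      have h4 := hzero b (interior_subset hb)
      rw [inner_add_right, real_inner_smul_right, real_inner_smul_right,
        real_inner_self_eq_norm_mul_norm,
        inv_mul_cancel_left₀ (norm_ne_zero_iff.mpr hy0), h4] at h3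
      have := norm_pos_iff.mpr hy0
      nlinarith
    -- the key pointwise positivity property
    have key : ∀ y ∈ dualSet K, y ≠ 0 → ∃ n : ℕ, 0 < ⟪y, (A ^ n) x⟫ := by
      intro y hyD hy0
      by_contra hn
      push_neg at hn
      have hzero : ∀ n, ⟪y, (A ^ n) x⟫ = 0 :=
        fun n => le_antisymm (hn n) (hyD _ (pow_mem_cone A hA n x hx))
      -- the face F of K
      set F : Set V := K ∩ ⋂ n : ℕ, {w : V | ⟪y, (A ^ n) w⟫ = 0} with hFdef
      have hmemF : ∀ w, w ∈ F ↔ (w ∈ K ∧ ∀ n, ⟪y, (A ^ n) w⟫ = 0) := by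
        intro w; simp [hFdef, Set.mem_iInter]
      have hFcl : IsClosed F :=
        hKcl.inter (isClosed_iInter fun n =>
          isClosed_eq (Continuous.inner continuous_const (A ^ n).continuous) continuous_const)
      have hFconv : Convex ℝ F := by
        intro w₁ h₁ w₂ h₂ a b ha hb hab
        rw [hmemF] at h₁ h₂ ⊢
        refine ⟨hKconv h₁.1 h₂.1 ha hb hab, fun n => ?_⟩
        rw [map_add, map_smul, map_smul, inner_add_right, real_inner_smul_right,
          real_inner_smul_right, h₁.2 n, h₂.2 n]
        ring
      have hFcone : ∀ c : ℝ, 0 ≤ c → ∀ w ∈ F, c • w ∈ F := by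
        intro c hc w hw
        rw [hmemF] at hw ⊢
        exact ⟨hKcone c hc w hw.1,
          fun n => by rw [map_smul, real_inner_smul_right, hw.2 n, mul_zero]⟩
      have hFpt : ∀ v, v ∈ F → -v ∈ F → v = 0 :=
        fun v h1 h2 => hKpt' v ((hmemF v).mp h1).1 ((hmemF _).mp h2).1
      obtain ⟨v, hvext, hv0⟩ := exists_extremal F hFcl hFconv hFcone hFpt
        ⟨x, (hmemF x).mpr ⟨hx, hzero⟩, hx0⟩
      have hvF := (hmemF v).mp hvext.1
      have hvK : IsExtremalVec K v := by
        refine ⟨hvF.1, ?_⟩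
        intro x₁ x₂ h₁ h₂ heq
        have hsplit : ∀ n, ⟪y, (A ^ n) x₁⟫ = 0 ∧ ⟪y, (A ^ n) x₂⟫ = 0 := by
          intro n
          have a1 : 0 ≤ ⟪y, (A ^ n) x₁⟫ := hyD _ (pow_mem_cone A hA n _ h₁)
          have a2 : 0 ≤ ⟪y, (A ^ n) x₂⟫ := hyD _ (pow_mem_cone A hA n _ h₂)
          have hadd : ⟪y, (A ^ n) x₁⟫ + ⟪y, (A ^ n) x₂⟫ = 0 := by
            rw [← inner_add_right, ← map_add, ← heq]; exact hvF.2 n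
          constructor <;> linarith
        exact hvext.2 x₁ x₂ ((hmemF x₁).mpr ⟨h₁, fun n => (hsplit n).1⟩)
          ((hmemF x₂).mpr ⟨h₂, fun n => (hsplit n).2⟩) heq
      -- the face G of the dual cone
      set G : Set V := dualSet K ∩ ⋂ n : ℕ, {z : V | ⟪z, (A ^ n) v⟫ = 0} with hGdef
      have hmemG : ∀ z, z ∈ G ↔ (z ∈ dualSet K ∧ ∀ n, ⟪z, (A ^ n) v⟫ = 0) := by
        intro z; simp [hGdef, Set.mem_iInter]
      have hGcl : IsClosed G :=
        hdual_cl.inter (isClosed_iInter fun n =>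
          isClosed_eq (Continuous.inner continuous_id continuous_const) continuous_const)
      have hGconv : Convex ℝ G := by
        intro z₁ h₁ z₂ h₂ a b ha hb hab
        rw [hmemG] at h₁ h₂ ⊢
        refine ⟨hdual_conv h₁.1 h₂.1 ha hb hab, fun n => ?_⟩
        rw [inner_add_left, real_inner_smul_left, real_inner_smul_left, h₁.2 n, h₂.2 n]
        ring
      have hGcone : ∀ c : ℝ, 0 ≤ c → ∀ z ∈ G, c • z ∈ G := by
        intro c hc z hz
        rw [hmemG] at hz ⊢
        exact ⟨hdual_cone c hc z hz.1,
          fun n => by rw [real_inner_smul_left, hz.2 n, mul_zero]⟩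
      have hGpt : ∀ z, z ∈ G → -z ∈ G → z = 0 :=
        fun z h1 h2 => hdual_pt z ((hmemG z).mp h1).1 ((hmemG _).mp h2).1
      have hyG : y ∈ G := (hmemG y).mpr ⟨hyD, hvF.2⟩
      obtain ⟨w, hwext, hw0⟩ := exists_extremal G hGcl hGconv hGcone hGpt ⟨y, hyG, hy0⟩
      have hwG := (hmemG w).mp hwext.1
      have hwdual : IsExtremalVec (dualSet K) w := by
        refine ⟨hwG.1, ?_⟩
        intro z₁ z₂ h₁ h₂ heq
        have hsplit : ∀ n, ⟪z₁, (A ^ n) v⟫ = 0 ∧ ⟪z₂, (A ^ n) v⟫ = 0 := by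
          intro n
          have a1 : 0 ≤ ⟪z₁, (A ^ n) v⟫ := h₁ _ (pow_mem_cone A hA n _ hvF.1)
          have a2 : 0 ≤ ⟪z₂, (A ^ n) v⟫ := h₂ _ (pow_mem_cone A hA n _ hvF.1)
          have hadd : ⟪z₁, (A ^ n) v⟫ + ⟪z₂, (A ^ n) v⟫ = 0 := by
            rw [← inner_add_left, ← heq]; exact hwG.2 n
          constructor <;> linarith
        exact hwext.2 z₁ z₂ ((hmemG z₁).mpr ⟨h₁, fun n => (hsplit n).1⟩)
          ((hmemG z₂).mpr ⟨h₂, fun n => (hsplit n).2⟩) heq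
      obtain ⟨n, hnpos⟩ := hR v w hvK hv0 hwdual hw0
      rw [hwG.2 n] at hnpos
      exact lt_irrefl 0 hnpos
    refine ⟨1, one_pos, ?_⟩
    have hsum := summable_exp_terms A 1 x
    have hzK : NormedSpace.exp ((1:ℝ) • A) x ∈ K := by
      rw [exp_apply_eq A 1 x]
      have hts := hsum.hasSum.tendsto_sum_nat
      refine hKcl.mem_of_tendsto hts (Filter.Eventually.of_forall ?_)
      intro m
      induction m with
      | zero => simpa using h0K
      | succ m ih =>
        rw [Finset.sum_range_succ]
        exact aux_add_mem hKconv hKcone ih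
          (hKcone _ (by positivity) _ (pow_mem_cone A hA m x hx))
    apply mem_interior_of_inner_pos hKconv hKcone hKint hzK
    intro y hyD hy0
    obtain ⟨n₀, hn₀⟩ := key y hyD hy0
    rw [inner_exp_apply]
    have hsummable := summable_inner_exp A 1 x y
    have hterm : 0 < (((n₀.factorial : ℝ))⁻¹ * 1 ^ n₀) * ⟪y, (A ^ n₀) x⟫ := by
      have hf : (0:ℝ) < ((n₀.factorial : ℝ))⁻¹ * 1 ^ n₀ := by positivity
      exact mul_pos hf hn₀
    calc (0:ℝ) < (((n₀.factorial : ℝ))⁻¹ * 1 ^ n₀) * ⟪y, (A ^ n₀) x⟫ := hterm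
      _ ≤ ∑' n : ℕ, (((n.factorial : ℝ))⁻¹ * 1 ^ n) * ⟪y, (A ^ n) x⟫ :=
        Summable.le_tsum hsummable n₀ (fun j _ => mul_nonneg (by positivity)
          (hyD _ (pow_mem_cone A hA j x hx)))
end

section
/- Let Ω be a nonempty finite set, A_ω a K-positive map and a_ω > 0 for each ω ∈ Ω. If A = ∑_ω A_ω is K-irreducible, then A_a = ∑_ω a_ω A_ω is K-irreducible. -/
open Filter Topology RealInnerProductSpace

variable {V : Type*} [NormedAddCommGroup V] [InnerProductSpace ℝ V] [FiniteDimensional ℝ V]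

/-- `K`-irreducibility, via the characterization: `Bx ≤ αx` for nonzero `x ∈ K` forces
`x` to be interior. -/
def IrredCond (K : Set V) (B : V →L[ℝ] V) : Prop :=
  ∀ x ∈ K, x ≠ 0 → ∀ α : ℝ, 0 ≤ α → α • x - B x ∈ K → x ∈ interior K

theorem stmt_15 (K : Set V) (hKcl : IsClosed K) (hKconv : Convex ℝ K)
    (hKcone : ∀ c : ℝ, 0 ≤ c → ∀ x ∈ K, c • x ∈ K)
    (hKint : (interior K).Nonempty) (hKpt : K ∩ (-K) = {(0 : V)})
    (Ω : Type*) [Fintype Ω] [Nonempty Ω]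
    (A : Ω → (V →L[ℝ] V)) (hA : ∀ ω, ∀ x ∈ K, A ω x ∈ K)
    (a : Ω → ℝ) (ha : ∀ ω, 0 < a ω)
    (hirr : IrredCond K (∑ ω, A ω)) :
    IrredCond K (∑ ω, a ω • A ω) := by
  intro x hx hne α hα hmem
  classical
  set m : ℝ := Finset.univ.inf' Finset.univ_nonempty a with hm
  have hmpos : 0 < m := by
    rw [hm]
    exact (Finset.lt_inf'_iff _).2 fun ω _ => ha ω
  have hmle : ∀ ω, m ≤ a ω := fun ω => Finset.inf'_le _ (Finset.mem_univ ω)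
  have addK : ∀ u ∈ K, ∀ v ∈ K, u + v ∈ K := by
    intro u hu v hv
    have h1 : (1/2 : ℝ) • u + (1/2 : ℝ) • v ∈ K :=
      hKconv hu hv (by norm_num) (by norm_num) (by norm_num)
    have h2 := hKcone 2 (by norm_num) _ h1
    have : (2 : ℝ) • ((1/2 : ℝ) • u + (1/2 : ℝ) • v) = u + v := by
      rw [smul_add, smul_smul, smul_smul]; norm_num
    rwa [this] at h2
  -- y = α•x - (∑ aω•Aω) x ∈ K
  have hy : α • x - ∑ ω, a ω • A ω x ∈ K := by
    have : (∑ ω, a ω • A ω) x = ∑ ω, a ω • A ω x := by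
      simp [ContinuousLinearMap.sum_apply]
    rwa [this] at hmem
  have hz : (∑ ω, (m⁻¹ * a ω - 1) • A ω x) ∈ K := by
    have h0 : (0 : V) ∈ K := by
      obtain ⟨w, hw⟩ := hKint
      simpa using hKcone 0 le_rfl w (interior_subset hw)
    refine Finset.sum_induction _ (· ∈ K) (fun u v hu hv => addK u hu v hv) h0 ?_
    intro ω _
    refine hKcone _ ?_ _ (hA ω x hx)
    have : (1:ℝ) ≤ m⁻¹ * a ω := by
      rw [inv_mul_eq_div, le_div_iff₀ hmpos, one_mul]
      exact hmle ω
    linarith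
  have hsum : m⁻¹ • (α • x - ∑ ω, a ω • A ω x) + ∑ ω, (m⁻¹ * a ω - 1) • A ω x
      = (α / m) • x - (∑ ω, A ω) x := by
    simp only [ContinuousLinearMap.sum_apply, smul_sub, smul_smul, Finset.smul_sum,
      sub_smul, one_smul, Finset.sum_sub_distrib, div_eq_inv_mul]
    abel
  have hmemK : (α / m) • x - (∑ ω, A ω) x ∈ K := by
    rw [← hsum]
    exact addK _ (hKcone _ (by positivity) _ hy) _ hz
  exact hirr x hx hne (α / m) (by positivity) hmemK
end
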